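/- Replica moment identity: let N, n be positive integers, let r ≥ 0 be an integer, let A be an N×n complex matrix, let S be a nonempty finite set of vectors in ℂ^n, and let p : S → [0,1] be a probability mass function on S (Σ_{s∈S} p(s) = 1). Define Z(y) = Σ_{s∈S} p(s) · exp(−‖y − A s‖²) for y ∈ ℂ^N. Then ∫ Dy Z(y)^{r+1} = Σ_{(s₀,…,s_r) ∈ S^{r+1}} (∏_{α=0}^{r} p(s_α)) · (r+1)^{−N} · exp(−Re tr(M Σ Mᴴ)), where M is the N×(r+1) matrix whose α-th column is A s_α and Σ = I_{r+1} − (1/(r+1))·𝟙𝟙ᴴ. -/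

import Mathlib

open MeasureTheory Matrix

/-- Completing the square for a sum of squared distances in ℂ. -/
lemma complete_sq (k : ℕ) (hk : 0 < k) (a : Fin k → ℂ) (z : ℂ) :
    ∑ α, Complex.normSq (z - a α)
      = k * Complex.normSq (z - (k : ℂ)⁻¹ * ∑ α, a α)
        + (∑ α, Complex.normSq (a α) - (k : ℝ)⁻¹ * Complex.normSq (∑ α, a α)) := by
  have hk' : (k : ℂ) ≠ 0 := Nat.cast_ne_zero.2 hk.ne'
  have h : ∀ w : ℂ, (Complex.normSq w : ℂ) = w * (starRingEnd ℂ) w := by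
    intro w; rw [Complex.mul_conj]
  apply Complex.ofReal_injective
  push_cast
  simp only [h, map_sub, map_sum, _root_.map_mul, map_inv₀, Complex.conj_natCast]
  rw [Finset.sum_congr rfl (fun α _ => by ring :
    ∀ α ∈ Finset.univ, (z - a α) * ((starRingEnd ℂ) z - (starRingEnd ℂ) (a α))
      = z * (starRingEnd ℂ) z - z * (starRingEnd ℂ) (a α)
        - a α * (starRingEnd ℂ) z + a α * (starRingEnd ℂ) (a α))]
  simp only [Finset.sum_add_distrib, Finset.sum_sub_distrib, Finset.sum_const,
    Finset.card_univ, Fintype.card_fin, nsmul_eq_mul, ← Finset.mul_sum, ← Finset.sum_mul,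
    ← map_sum]
  field_simp
  ring

/-- Gaussian integral over ℂ. -/
lemma gauss_c (c : ℝ) (hc : 0 < c) :
    ∫ z : ℂ, Real.exp (-c * ‖z‖ ^ 2) = Real.pi / c := by
  rw [GaussianFourier.integral_rexp_neg_mul_sq_norm hc, Complex.finrank_real_complex]
  norm_num

lemma gauss_c_integrable (c : ℝ) (hc : 0 < c) :
    Integrable (fun z : ℂ => Real.exp (-c * ‖z‖ ^ 2)) := by
  have := GaussianFourier.integrable_cexp_neg_mul_sq_norm_add (V := ℂ) (b := (c : ℂ))
    (by simpa using hc) 0 0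
  have h2 := this.norm
  simp only [Complex.norm_exp] at h2
  convert h2 using 2 with z
  congr 1
  simp [Complex.add_re, Complex.ofReal_pow]
  norm_cast
  exact Or.inl rfl

/-- Integral of the per-coordinate replicated Gaussian. -/
lemma coord_integral (k : ℕ) (hk : 0 < k) (a : Fin k → ℂ) :
    ∫ z : ℂ, Real.exp (-(∑ α, ‖z - a α‖ ^ 2))
      = (Real.pi / k) * Real.exp
          (-(∑ α, Complex.normSq (a α) - (k : ℝ)⁻¹ * Complex.normSq (∑ α, a α))) := by
  have hke : (0 : ℝ) < k := by exact_mod_cast hk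
  have h1 : ∀ z : ℂ, Real.exp (-(∑ α, ‖z - a α‖ ^ 2))
      = Real.exp (-(∑ α, Complex.normSq (a α) - (k : ℝ)⁻¹ * Complex.normSq (∑ α, a α)))
        * Real.exp (-(k : ℝ) * ‖z - (k : ℂ)⁻¹ * ∑ α, a α‖ ^ 2) := by
    intro z
    rw [← Real.exp_add]
    congr 1
    have := complete_sq k hk a z
    simp only [Complex.sq_norm]
    rw [this]; ring
  simp_rw [h1]
  rw [integral_const_mul]
  rw [integral_sub_right_eq_self (fun w : ℂ => Real.exp (-(k : ℝ) * ‖w‖ ^ 2))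
    ((k : ℂ)⁻¹ * ∑ α, a α)]
  rw [gauss_c _ hke]
  ring

lemma coord_integrable (k : ℕ) (hk : 0 < k) (a : Fin k → ℂ) :
    Integrable (fun z : ℂ => Real.exp (-(∑ α, ‖z - a α‖ ^ 2))) := by
  have hke : (0 : ℝ) < k := by exact_mod_cast hk
  have h1 : ∀ z : ℂ, Real.exp (-(∑ α, ‖z - a α‖ ^ 2))
      = Real.exp (-(∑ α, Complex.normSq (a α) - (k : ℝ)⁻¹ * Complex.normSq (∑ α, a α)))
        * Real.exp (-(k : ℝ) * ‖z - (k : ℂ)⁻¹ * ∑ α, a α‖ ^ 2) := by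
    intro z
    rw [← Real.exp_add]
    congr 1
    have := complete_sq k hk a z
    simp only [Complex.sq_norm]
    rw [this]; ring
  simp_rw [h1]
  exact (((gauss_c_integrable _ hke).comp_sub_right _)).const_mul _

/-- replica moment identity for a finite-alphabet input distribution. -/
theorem statement14 (N n r : ℕ) (hN : 0 < N) (hn : 0 < n)
    (A : Matrix (Fin N) (Fin n) ℂ)
    (S : Finset (Fin n → ℂ)) (hS : S.Nonempty)
    (p : (Fin n → ℂ) → ℝ)
    (hp0 : ∀ s ∈ S, 0 ≤ p s) (hp1 : ∀ s ∈ S, p s ≤ 1)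
    (hsum : ∑ s ∈ S, p s = 1) :
    let Sm : Matrix (Fin (r + 1)) (Fin (r + 1)) ℂ :=
      1 - ((r + 1 : ℂ))⁻¹ • Matrix.of fun _ _ => 1
    let M : (Fin (r + 1) → (Fin n → ℂ)) → Matrix (Fin N) (Fin (r + 1)) ℂ :=
      fun t => Matrix.of fun i α => (A *ᵥ t α) i
    (1 / Real.pi ^ N) *
        ∫ y : Fin N → ℂ,
          (∑ s ∈ S, p s * Real.exp (-(∑ i, ‖y i - (A *ᵥ s) i‖ ^ 2))) ^ (r + 1) =
      ∑ t ∈ Fintype.piFinset (fun _ : Fin (r + 1) => S),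
        (∏ α, p (t α)) * ((1 / (r + 1 : ℝ) ^ N) *
          Real.exp (-(Matrix.trace (M t * Sm * (M t)ᴴ)).re)) := by
  intro Sm M
  have hr : 0 < r + 1 := Nat.succ_pos r
  have hrc : (0 : ℝ) < (r + 1 : ℕ) := by exact_mod_cast hr
  -- Step 1: expand the power into a sum over replica tuples
  have hpow : ∀ y : Fin N → ℂ,
      (∑ s ∈ S, p s * Real.exp (-(∑ i, ‖y i - (A *ᵥ s) i‖ ^ 2))) ^ (r + 1)
        = ∑ t ∈ Fintype.piFinset (fun _ : Fin (r + 1) => S),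
            (∏ α, p (t α)) * Real.exp (-(∑ i, ∑ α, ‖y i - (A *ᵥ t α) i‖ ^ 2)) := by
    intro y
    have : (∑ s ∈ S, p s * Real.exp (-(∑ i, ‖y i - (A *ᵥ s) i‖ ^ 2))) ^ (r + 1)
        = ∏ _α : Fin (r + 1), ∑ s ∈ S, p s * Real.exp (-(∑ i, ‖y i - (A *ᵥ s) i‖ ^ 2)) := by
      rw [Finset.prod_const, Finset.card_univ, Fintype.card_fin]
    rw [this, Finset.prod_univ_sum]
    refine Finset.sum_congr rfl fun t _ => ?_
    rw [Finset.prod_mul_distrib]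
    congr 1
    rw [← Real.exp_sum]
    congr 1
    rw [Finset.sum_comm]
    simp [Finset.sum_neg_distrib]
  -- per-tuple Gaussian integral
  have key : ∀ t : Fin (r + 1) → (Fin n → ℂ),
      ∫ y : Fin N → ℂ, Real.exp (-(∑ i, ∑ α, ‖y i - (A *ᵥ t α) i‖ ^ 2))
        = Real.pi ^ N * ((1 / (r + 1 : ℝ) ^ N) *
            Real.exp (-(Matrix.trace (M t * Sm * (M t)ᴴ)).re)) := by
    intro t
    have h1 : ∀ y : Fin N → ℂ, Real.exp (-(∑ i, ∑ α, ‖y i - (A *ᵥ t α) i‖ ^ 2))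
        = ∏ i, Real.exp (-(∑ α, ‖y i - (A *ᵥ t α) i‖ ^ 2)) := by
      intro y
      rw [← Real.exp_sum]
      congr 1
      simp [Finset.sum_neg_distrib]
    simp_rw [h1]
    rw [MeasureTheory.integral_fintype_prod_volume_eq_prod
      (f := fun i (z : ℂ) => Real.exp (-(∑ α, ‖z - (A *ᵥ t α) i‖ ^ 2)))]
    have h2 : ∀ i, ∫ z : ℂ, Real.exp (-(∑ α, ‖z - (A *ᵥ t α) i‖ ^ 2))
        = (Real.pi / (r + 1 : ℕ)) * Real.exp
            (-(∑ α, Complex.normSq ((A *ᵥ t α) i)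
              - ((r + 1 : ℕ) : ℝ)⁻¹ * Complex.normSq (∑ α, (A *ᵥ t α) i))) :=
      fun i => coord_integral (r + 1) hr (fun α => (A *ᵥ t α) i)
    simp_rw [h2]
    rw [Finset.prod_mul_distrib, Finset.prod_const, Finset.card_univ, Fintype.card_fin,
      ← Real.exp_sum]
    have htr : (Matrix.trace (M t * Sm * (M t)ᴴ)).re
        = ∑ i, (∑ α, Complex.normSq ((A *ᵥ t α) i)
            - ((r + 1 : ℕ) : ℝ)⁻¹ * Complex.normSq (∑ α, (A *ᵥ t α) i)) := by
      have hC : Matrix.trace (M t * Sm * (M t)ᴴ)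
          = ((∑ i, (∑ α, Complex.normSq ((A *ᵥ t α) i)
              - ((r + 1 : ℕ) : ℝ)⁻¹ * Complex.normSq (∑ α, (A *ᵥ t α) i)) : ℝ) : ℂ) := by
        push_cast
        rw [Matrix.trace]
        refine Finset.sum_congr rfl fun i _ => ?_
        simp only [Matrix.diag_apply, Matrix.mul_apply, Matrix.conjTranspose_apply,
          Matrix.sub_apply, Matrix.smul_apply, Matrix.one_apply, Matrix.of_apply,
          smul_eq_mul]
        have hin : ∀ β : Fin (r + 1),
            (∑ α, (M t) i α * ((if α = β then (1 : ℂ) else 0) - (r + 1 : ℂ)⁻¹ * 1))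
              = (M t) i β - (r + 1 : ℂ)⁻¹ * ∑ α, (M t) i α := by
          intro β
          simp only [mul_sub, mul_one, mul_ite, mul_zero, Finset.sum_sub_distrib,
            Finset.sum_ite_eq', Finset.mem_univ, if_true, ← Finset.mul_sum]
          ring_nf
          rw [← Finset.sum_mul, mul_comm]
        calc ∑ β, (∑ α, (M t) i α * ((if α = β then (1 : ℂ) else 0) - (r + 1 : ℂ)⁻¹ * 1))
              * (starRingEnd ℂ) ((M t) i β)
            = ∑ β, ((M t) i β - (r + 1 : ℂ)⁻¹ * ∑ α, (M t) i α)
              * (starRingEnd ℂ) ((M t) i β) := by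
              exact Finset.sum_congr rfl fun β _ => by rw [hin β]
          _ = ∑ β, (M t) i β * (starRingEnd ℂ) ((M t) i β)
              - (r + 1 : ℂ)⁻¹ * ((∑ α, (M t) i α) * (starRingEnd ℂ) (∑ β, (M t) i β)) := by
              simp only [sub_mul, Finset.sum_sub_distrib, ← Finset.mul_sum, map_sum]
              ring
          _ = (∑ α, (Complex.normSq ((M t) i α) : ℂ))
              - (r + 1 : ℂ)⁻¹ * (Complex.normSq (∑ α, (M t) i α) : ℂ) := by
              simp_rw [Complex.mul_conj]
      rw [hC, Complex.ofReal_re]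
    rw [htr, div_pow]
    simp only [Finset.sum_neg_distrib]
    push_cast
    ring
  -- integrability of each term
  have hint : ∀ t : Fin (r + 1) → (Fin n → ℂ),
      Integrable (fun y : Fin N → ℂ =>
        (∏ α, p (t α)) * Real.exp (-(∑ i, ∑ α, ‖y i - (A *ᵥ t α) i‖ ^ 2))) := by
    intro t
    have h1 : ∀ y : Fin N → ℂ, Real.exp (-(∑ i, ∑ α, ‖y i - (A *ᵥ t α) i‖ ^ 2))
        = ∏ i, Real.exp (-(∑ α, ‖y i - (A *ᵥ t α) i‖ ^ 2)) := by
      intro y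
      rw [← Real.exp_sum]
      congr 1
      simp [Finset.sum_neg_distrib]
    simp_rw [h1]
    exact (Integrable.fintype_prod
      (f := fun i (z : ℂ) => Real.exp (-(∑ α, ‖z - (A *ᵥ t α) i‖ ^ 2)))
      (fun i => coord_integrable (r + 1) hr (fun α => (A *ᵥ t α) i))).const_mul _
  simp_rw [hpow]
  rw [integral_finset_sum _ (fun t _ => hint t)]
  have hπ : Real.pi ^ N ≠ 0 := pow_ne_zero _ Real.pi_ne_zero
  rw [Finset.mul_sum]
  refine Finset.sum_congr rfl fun t _ => ?_
  rw [integral_const_mul, key t]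
  field_simp
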